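/- Let X, Y, E be finite sets with |X| = m, |Y| = n, |E| = ε, and let ∂₀ : E → X and ∂₁ : E → Y be maps (so E is the edge set of a bipartite multigraph with partite sets X and Y). Let p, q : E → ℝ be nonnegative functions with Σ_{e : ∂₀(e)=x} p(e) = 1 for each x ∈ X and Σ_{e : ∂₁(e)=y} q(e) = 1 for each y ∈ Y. Define the ε×m real matrix K by K_{e,x} = √(p(e)) if ∂₀(e) = x and 0 otherwise, the ε×n real matrix L by L_{e,y} = √(q(e)) if ∂₁(e) = y and 0 otherwise, the reflections R₀ = 2·K·ᵗK − I_ε and R₁ = 2·L·ᵗL − I_ε, the Szegedy matrix W = R₁·R₀, and the m×m matrix A_p = ᵗK·L·ᵗL·K. Then for every complex (or real) number u with u ≠ 1 and u ≠ −1, det(I_ε − u·W) = (1−u)^(ε−m−n) · (1+u)^(n−m) · det((1+u)²·I_m − 4u·A_p), with integer (possibly negative) exponents. -/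

import Mathlib

open Matrix

/-- Orthonormality of the columns of the incidence matrix. -/
lemma szegedy_aux_orth {E X : Type*} [Fintype E] [DecidableEq X]
    (d : E → X) (p : E → ℝ) (hp0 : ∀ e, 0 ≤ p e)
    (hp : ∀ x : X, ∑ e ∈ Finset.univ.filter (fun e => d e = x), p e = 1) :
    (Matrix.of fun e x => if d e = x then (Real.sqrt (p e) : ℂ) else 0)ᵀ *
      (Matrix.of fun e x => if d e = x then (Real.sqrt (p e) : ℂ) else 0) = 1 := by
  ext x x'
  simp only [Matrix.mul_apply, Matrix.transpose_apply, Matrix.of_apply]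
  by_cases h : x = x'
  · subst h
    rw [Matrix.one_apply_eq]
    have h1 : ∀ e, (if d e = x then (Real.sqrt (p e) : ℂ) else 0) *
        (if d e = x then (Real.sqrt (p e) : ℂ) else 0)
        = if d e = x then ((p e : ℂ)) else 0 := by
      intro e
      split_ifs
      · rw [← Complex.ofReal_mul, Real.mul_self_sqrt (hp0 e)]
      · ring
    rw [Finset.sum_congr rfl fun e _ => h1 e, ← Finset.sum_filter]
    exact_mod_cast hp x
  · rw [Matrix.one_apply_ne h]
    apply Finset.sum_eq_zero
    intro e _
    by_cases h1 : d e = x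
    · rw [if_neg (fun h2 => h (h1.symm.trans h2)), mul_zero]
    · rw [if_neg h1, zero_mul]

/-- Shifted Weinstein–Aronszajn identity. -/
lemma szegedy_aux_wa {I J : Type*} [Fintype I] [Fintype J] [DecidableEq I] [DecidableEq J]
    (c : ℂ) (hc : c ≠ 0) (A : Matrix I J ℂ) (B : Matrix J I ℂ) :
    det (c • (1 : Matrix I I ℂ) + A * B)
      = c ^ ((Fintype.card I : ℤ) - (Fintype.card J : ℤ)) *
        det (c • (1 : Matrix J J ℂ) + B * A) := by
  have h1 : c • (1 : Matrix I I ℂ) + A * B = c • (1 + A * (c⁻¹ • B)) := by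
    rw [smul_add, Matrix.mul_smul, smul_smul, mul_inv_cancel₀ hc, one_smul]
  have h2 : (1 : Matrix J J ℂ) + c⁻¹ • (B * A) = c⁻¹ • (c • 1 + B * A) := by
    rw [smul_add, smul_smul, inv_mul_cancel₀ hc, one_smul]
  rw [h1, Matrix.det_smul, det_one_add_mul_comm, Matrix.smul_mul, h2, Matrix.det_smul,
    zpow_sub₀ hc, zpow_natCast, zpow_natCast, inv_pow, div_eq_mul_inv]
  ring

/-- Theorem 5.1: characteristic polynomial of the Szegedy matrix of a bipartite
(multi)graph. Here `E` is the edge set of a bipartite multigraph with partite sets `X`,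
`Y` and endpoint maps `d0`, `d1`; `p`, `q` are the transition probabilities, `K`, `L` are
the incidence matrices with entries `√p(e)`, `√q(e)` (regarded as complex matrices),
`R₀ = 2 K ᵗK - I`, `R₁ = 2 L ᵗL - I`, `W = R₁ R₀`, and `A_p = ᵗK L ᵗL K`. -/
theorem szegedy_char_poly
    {X Y E : Type*} [Fintype X] [Fintype Y] [Fintype E]
    [DecidableEq X] [DecidableEq Y] [DecidableEq E]
    (m n ε : ℕ) (hm : Fintype.card X = m) (hn : Fintype.card Y = n)
    (hε : Fintype.card E = ε)
    (d0 : E → X) (d1 : E → Y) (p q : E → ℝ)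
    (hp0 : ∀ e, 0 ≤ p e) (hq0 : ∀ e, 0 ≤ q e)
    (hp : ∀ x : X, ∑ e ∈ Finset.univ.filter (fun e => d0 e = x), p e = 1)
    (hq : ∀ y : Y, ∑ e ∈ Finset.univ.filter (fun e => d1 e = y), q e = 1)
    (K : Matrix E X ℂ)
    (hK : K = Matrix.of fun e x => if d0 e = x then (Real.sqrt (p e) : ℂ) else 0)
    (L : Matrix E Y ℂ)
    (hL : L = Matrix.of fun e y => if d1 e = y then (Real.sqrt (q e) : ℂ) else 0)
    (u : ℂ) (hu1 : u ≠ 1) (hu2 : u ≠ -1) :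
    det ((1 : Matrix E E ℂ) -
        u • (((2 : ℂ) • (L * Lᵀ) - 1) * ((2 : ℂ) • (K * Kᵀ) - 1)))
      = (1 - u) ^ ((ε : ℤ) - (m : ℤ) - (n : ℤ)) * (1 + u) ^ ((n : ℤ) - (m : ℤ)) *
        det ((1 + u) ^ 2 • (1 : Matrix X X ℂ) - (4 * u) • (Kᵀ * L * Lᵀ * K)) := by
  subst hm hn hε
  have hc : (1 : ℂ) - u ≠ 0 := sub_ne_zero.mpr fun h => hu1 h.symm
  have hd : (1 : ℂ) + u ≠ 0 := fun h => hu2 (by linear_combination h)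
  have hKK : Kᵀ * K = 1 := by rw [hK]; exact szegedy_aux_orth d0 p hp0 hp
  have hLL : Lᵀ * L = 1 := by rw [hL]; exact szegedy_aux_orth d1 q hq0 hq
  clear hK hL hp hq hp0 hq0
  set A : Matrix X X ℂ := Kᵀ * L * Lᵀ * K with hA
  -- Step 1: write `1 - u W` as `(1-u)•1 + F * G` with `F : E × (X ⊕ Y)`, `G : (X ⊕ Y) × E`.
  have hW : (1 : Matrix E E ℂ) -
      u • (((2 : ℂ) • (L * Lᵀ) - 1) * ((2 : ℂ) • (K * Kᵀ) - 1))
      = (1 - u) • 1 +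
        (fromCols ((2*u) • K - (4*u) • (L * (Lᵀ * K))) ((2*u) • L)) *
          (fromRows Kᵀ Lᵀ) := by
    rw [fromCols_mul_fromRows]
    simp only [Matrix.sub_mul, Matrix.mul_sub, Matrix.smul_mul, Matrix.mul_smul,
      Matrix.mul_one, Matrix.one_mul, Matrix.mul_assoc, smul_smul, sub_smul, smul_sub]
    module
  rw [hW, szegedy_aux_wa _ hc, fromRows_mul_fromCols]
  -- Step 2: compute the four blocks.
  have hTL : Kᵀ * ((2*u) • K - (4*u) • (L * (Lᵀ * K)))
      = (2*u) • (1 : Matrix X X ℂ) - (4*u) • A := by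
    rw [Matrix.mul_sub, Matrix.mul_smul, Matrix.mul_smul, hKK, hA]
    simp only [Matrix.mul_assoc]
  have hBL : Lᵀ * ((2*u) • K - (4*u) • (L * (Lᵀ * K))) = (-(2*u)) • (Lᵀ * K) := by
    rw [Matrix.mul_sub, Matrix.mul_smul, Matrix.mul_smul, ← Matrix.mul_assoc, hLL,
      Matrix.one_mul]
    module
  have hTR : Kᵀ * ((2*u) • L) = (2*u) • (Kᵀ * L) := Matrix.mul_smul ..
  have hBR : Lᵀ * ((2*u) • L) = (2*u) • (1 : Matrix Y Y ℂ) := by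
    rw [Matrix.mul_smul, hLL]
  rw [hTL, hBL, hTR, hBR]
  -- Step 3: absorb the scalar multiple of the identity into the blocks.
  have hsum : (1 - u) • (1 : Matrix (X ⊕ Y) (X ⊕ Y) ℂ)
      + fromBlocks ((2*u) • 1 - (4*u) • A) ((2*u) • (Kᵀ * L)) ((-(2*u)) • (Lᵀ * K)) ((2*u) • 1)
      = fromBlocks ((1+u) • 1 - (4*u) • A) ((2*u) • (Kᵀ * L)) ((-(2*u)) • (Lᵀ * K))
          ((1+u) • 1) := by
    have e1 : (1-u) • (1 : Matrix X X ℂ) + ((2*u) • 1 - (4*u) • A)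
        = (1+u) • 1 - (4*u) • A := by module
    have e2 : (1-u) • (1 : Matrix Y Y ℂ) + (2*u) • 1 = (1+u) • 1 := by module
    rw [← Matrix.fromBlocks_one, Matrix.fromBlocks_smul, Matrix.fromBlocks_add,
      smul_zero, smul_zero, zero_add, zero_add, e1, e2]
  rw [hsum]
  -- Step 4: Schur complement.
  haveI hInv : Invertible ((1+u) • (1 : Matrix Y Y ℂ)) :=
    ⟨(1+u)⁻¹ • 1,
      by rw [Matrix.smul_mul, Matrix.one_mul, smul_smul, inv_mul_cancel₀ hd, one_smul],
      by rw [Matrix.smul_mul, Matrix.one_mul, smul_smul, mul_inv_cancel₀ hd, one_smul]⟩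
  rw [Matrix.det_fromBlocks₂₂]
  have hInvOf : ⅟((1+u) • (1 : Matrix Y Y ℂ)) = (1+u)⁻¹ • 1 :=
    invOf_eq_right_inv
      (by rw [Matrix.smul_mul, Matrix.one_mul, smul_smul, mul_inv_cancel₀ hd, one_smul])
  rw [hInvOf]
  have hmul : ((2*u) • (Kᵀ * L)) * ((1+u)⁻¹ • (1 : Matrix Y Y ℂ)) * ((-(2*u)) • (Lᵀ * K))
      = ((2*u) * (1+u)⁻¹ * (-(2*u))) • A := by
    simp only [Matrix.smul_mul, Matrix.mul_smul, Matrix.mul_one, smul_smul]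
    rw [hA, ← Matrix.mul_assoc]
    module
  rw [hmul]
  set S : Matrix X X ℂ :=
    (1+u) • 1 - (4*u) • A - ((2*u) * (1+u)⁻¹ * (-(2*u))) • A with hSdef
  have hs : (1+u) * ((2*u) * (1+u)⁻¹ * (-(2*u))) = -(4*u^2) := by
    field_simp
    ring
  have hS : (1+u) • S = (1 + u) ^ 2 • (1 : Matrix X X ℂ) - (4 * u) • A := by
    rw [hSdef, smul_sub, smul_sub, smul_smul, smul_smul, smul_smul, hs]
    module
  have hdetS : ((1:ℂ)+u) ^ (Fintype.card X) * S.det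
      = det ((1 + u) ^ 2 • (1 : Matrix X X ℂ) - (4 * u) • A) := by
    rw [← hS, Matrix.det_smul]
  have hdet1 : det ((1+u) • (1 : Matrix Y Y ℂ)) = (1+u) ^ (Fintype.card Y) := by
    rw [Matrix.det_smul, det_one, mul_one]
  rw [hdet1, ← hdetS, Fintype.card_sum]
  -- Step 5: bookkeeping with the exponents.
  rw [← zpow_natCast ((1:ℂ)+u) (Fintype.card X), ← zpow_natCast ((1:ℂ)+u) (Fintype.card Y)]
  have h1 : ((Fintype.card E : ℤ)) - ((Fintype.card X + Fintype.card Y : ℕ) : ℤ)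
      = (Fintype.card E : ℤ) - (Fintype.card X : ℤ) - (Fintype.card Y : ℤ) := by
    push_cast; ring
  have h3 : ((1:ℂ)+u) ^ ((Fintype.card Y : ℤ))
      = (1+u) ^ ((Fintype.card Y : ℤ) - (Fintype.card X : ℤ)) *
        (1+u) ^ ((Fintype.card X : ℤ)) := by
    rw [← zpow_add₀ hd]
    congr 1
    ring
  rw [h1, h3]
  ring
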